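/- Let M be a positive integer, let γ be an irrational real number and let p/q be a convergent of the continued fraction expansion of γ such that q > 6M. Let A, B, μ be real numbers with A > 0 and B > 1, and set ε := ‖μq‖ − M·‖γq‖, where ‖·‖ denotes the distance to the nearest integer. If ε > 0, then there is no solution to the inequality 0 < |uγ − v + μ| < A·B^{−u} in positive integers u, v with u ≤ M and u ≥ log(Aq/ε)/log B. -/

import Mathlib

/-- The distance from a real number to the nearest integer. -/
noncomputable def distNearestInt (x : ℝ) : ℝ := |x - round x|

/-- The continuants of the continued fraction of a real number are integers. -/
lemma contsAux_int (γ : ℝ) : ∀ n : ℕ,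
    ∃ z w : ℤ, ((GenContFract.of γ).contsAux n).a = (z : ℝ) ∧
      ((GenContFract.of γ).contsAux n).b = (w : ℝ)
  | 0 => ⟨1, 0, by simp [GenContFract.contsAux], by simp [GenContFract.contsAux]⟩
  | 1 => ⟨⌊γ⌋, 1, by simp [GenContFract.contsAux, GenContFract.of_h_eq_floor],
      by simp [GenContFract.contsAux]⟩
  | (n + 2) => by
    obtain ⟨z, w, hz, hw⟩ := contsAux_int γ n
    obtain ⟨z', w', hz', hw'⟩ := contsAux_int γ (n + 1)
    cases h : (GenContFract.of γ).s.get? n with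
    | none =>
        refine ⟨z', w', ?_, ?_⟩ <;> simp [GenContFract.contsAux, h, hz', hw']
    | some gp =>
        have ha : gp.a = 1 := GenContFract.of_partNum_eq_one (GenContFract.partNum_eq_s_a h)
        obtain ⟨b, hb⟩ := GenContFract.exists_int_eq_of_partDen (GenContFract.partDen_eq_s_b h)
        refine ⟨b * z' + z, b * w' + w, ?_, ?_⟩ <;>
          · simp only [GenContFract.contsAux, h, GenContFract.nextConts, GenContFract.nextNum,
              GenContFract.nextDen, ha, hb, hz, hw, hz', hw']
            push_cast
            ring

/-- Dujella–Pethő reduction lemma: let `M` be a positive integer, `p/q` a convergent of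
the continued fraction of the irrational `γ` with `q > 6M`, and `A, B, μ` reals with
`A > 0`, `B > 1`. If `ε := ‖μq‖ − M·‖γq‖ > 0`, then there is no solution of
`0 < |uγ − v + μ| < A·B^{−u}` in positive integers `u, v` with `u ≤ M` and
`u ≥ log(Aq/ε)/log B`. -/
theorem dujella_petho_reduction
    (M : ℕ) (hM : 0 < M) (γ : ℝ) (hγ : Irrational γ)
    (i : ℕ) (p q : ℝ)
    (hp : p = (GenContFract.of γ).nums i)
    (hq : q = (GenContFract.of γ).dens i)
    (hq6 : 6 * (M : ℝ) < q)
    (A B μ ε : ℝ) (hA : 0 < A) (hB : 1 < B)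
    (hε : ε = distNearestInt (μ * q) - (M : ℝ) * distNearestInt (γ * q))
    (hεpos : 0 < ε) :
    ¬ ∃ u v : ℕ, 0 < u ∧ 0 < v ∧
        0 < |(u : ℝ) * γ - (v : ℝ) + μ| ∧
        |(u : ℝ) * γ - (v : ℝ) + μ| < A * B ^ (-(u : ℤ)) ∧
        u ≤ M ∧ Real.log (A * q / ε) / Real.log B ≤ (u : ℝ) := by
  rintro ⟨u, v, hu, hv, hΛpos, hΛlt, huM, hulog⟩
  have hM1 : (1 : ℝ) ≤ (M : ℝ) := by exact_mod_cast hM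
  have hq06 : (6 : ℝ) ≤ q := by nlinarith
  have hqpos : (0 : ℝ) < q := by linarith
  -- p and q are integers
  obtain ⟨P, Q, hP', hQ'⟩ := contsAux_int γ (i + 1)
  have hP : p = (P : ℝ) := by
    rw [hp, GenContFract.num_eq_conts_a, GenContFract.nth_cont_eq_succ_nth_contAux]; exact hP'
  have hQ : q = (Q : ℝ) := by
    rw [hq, GenContFract.den_eq_conts_b, GenContFract.nth_cont_eq_succ_nth_contAux]; exact hQ'
  -- the continued fraction of γ does not terminate
  have hterm : ¬(GenContFract.of γ).TerminatedAt i := by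
    intro h
    obtain ⟨r, hr⟩ := (GenContFract.terminates_iff_rat γ).1 ⟨i, h⟩
    exact hγ ⟨r, hr.symm⟩
  -- convergent approximation bound
  set d' : ℝ := (GenContFract.of γ).dens (i + 1) with hd'
  have hmono : q ≤ d' := by rw [hq, hd']; exact GenContFract.of_den_mono
  have hd'pos : 0 < d' := lt_of_lt_of_le hqpos hmono
  have happrox : |γ - p / q| ≤ 1 / (q * d') := by
    have := GenContFract.abs_sub_convs_le hterm (v := γ) (n := i)
    rwa [GenContFract.conv_eq_num_div_den, ← hp, ← hq, ← hd'] at this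
  set δ : ℝ := γ * q - p with hδdef
  have hδq : |δ| ≤ 1 / q := by
    have h1 : δ = (γ - p / q) * q := by field_simp [hδdef]; exact hδdef
    rw [h1, abs_mul, abs_of_pos hqpos]
    calc |γ - p / q| * q ≤ 1 / (q * d') * q := by
          exact mul_le_mul_of_nonneg_right happrox (le_of_lt hqpos)
      _ = 1 / d' := by field_simp
      _ ≤ 1 / q := one_div_le_one_div_of_le hqpos hmono
  have hδ6 : |δ| ≤ 1 / 6 := by
    refine hδq.trans (one_div_le_one_div_of_le (by norm_num) hq06)
  -- distance to nearest integer of γ*q is |δ|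
  have hround : round (γ * q) = P := by
    have h1 : γ * q = δ + (P : ℝ) := by rw [hδdef, hP]; ring
    have h2 : round δ = 0 := by
      rw [round_eq_zero_iff]
      constructor <;> [linarith [abs_le.1 hδ6 |>.1]; linarith [abs_le.1 hδ6 |>.2]]
    rw [h1, round_add_intCast, h2, zero_add]
  have hdγ : distNearestInt (γ * q) = |δ| := by
    rw [distNearestInt, hround, ← hP, hδdef]
  -- set up μ*q
  set m : ℤ := round (μ * q) with hm
  set r : ℝ := μ * q - m with hr
  have hdμ : distNearestInt (μ * q) = |r| := rfl
  have hrhalf : |r| ≤ 1 / 2 := abs_sub_round (μ * q)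
  have hεeq : ε = |r| - (M : ℝ) * |δ| := by rw [hε, hdμ, hdγ]
  -- the key identity
  set N : ℤ := (u : ℤ) * P - (v : ℤ) * Q + m with hN
  have key : q * ((u : ℝ) * γ - (v : ℝ) + μ) = (u : ℝ) * δ + r + (N : ℝ) := by
    rw [hδdef, hr, hN, hP, hQ]; push_cast; ring
  -- bound u*|δ| ≤ M*|δ|
  have huδ : (u : ℝ) * |δ| ≤ (M : ℝ) * |δ| := by
    have : (u : ℝ) ≤ (M : ℝ) := by exact_mod_cast huM
    exact mul_le_mul_of_nonneg_right this (abs_nonneg _)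
  have habsuδ : |(u : ℝ) * δ| = (u : ℝ) * |δ| := by
    rw [abs_mul, Nat.abs_cast]
  -- main lower bound: ε ≤ q * |Λ|
  have hlow : ε ≤ q * |(u : ℝ) * γ - (v : ℝ) + μ| := by
    rw [← abs_of_pos hqpos, ← abs_mul, key]
    rcases eq_or_ne N 0 with h0 | h0
    · have h1 : |r| ≤ |(u : ℝ) * δ + r + (N : ℝ)| + (u : ℝ) * |δ| := by
        rw [h0]
        push_cast
        calc |r| = |((u : ℝ) * δ + r + 0) - (u : ℝ) * δ| := by ring_nf
          _ ≤ |(u : ℝ) * δ + r + 0| + |(u : ℝ) * δ| := abs_sub _ _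
          _ = |(u : ℝ) * δ + r + 0| + (u : ℝ) * |δ| := by rw [habsuδ]
      linarith [hεeq ▸ le_refl ε, huδ, h1]
    · have hN1 : (1 : ℝ) ≤ |(N : ℝ)| := by
        rw [← Int.cast_abs]
        exact_mod_cast Int.one_le_abs h0
      have h1 : |(N : ℝ)| ≤ |(u : ℝ) * δ + r + (N : ℝ)| + (u : ℝ) * |δ| + |r| := by
        calc |(N : ℝ)| = |((u : ℝ) * δ + r + (N : ℝ)) - (u : ℝ) * δ - r| := by ring_nf
          _ ≤ |((u : ℝ) * δ + r + (N : ℝ)) - (u : ℝ) * δ| + |r| := abs_sub _ _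
          _ ≤ |(u : ℝ) * δ + r + (N : ℝ)| + |(u : ℝ) * δ| + |r| := by
              linarith [abs_sub ((u : ℝ) * δ + r + (N : ℝ)) ((u : ℝ) * δ)]
          _ = |(u : ℝ) * δ + r + (N : ℝ)| + (u : ℝ) * |δ| + |r| := by rw [habsuδ]
      have hεle : ε ≤ 1 / 2 - (M : ℝ) * |δ| := by
        rw [hεeq]; linarith
      linarith
  -- conclude: B^u < A*q/ε
  have hBupos : (0 : ℝ) < B ^ u := by positivity
  have hzpow : B ^ (-(u : ℤ)) = (B ^ u)⁻¹ := by
    rw [zpow_neg, zpow_natCast]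
  have h3 : ε < q * (A * (B ^ u)⁻¹) := by
    refine lt_of_le_of_lt hlow ?_
    exact mul_lt_mul_of_pos_left (hzpow ▸ hΛlt) hqpos
  have h4 : B ^ u * ε < A * q := by
    have h5 := mul_lt_mul_of_pos_left h3 hBupos
    calc B ^ u * ε < B ^ u * (q * (A * (B ^ u)⁻¹)) := h5
      _ = A * q := by field_simp
  have h6 : (B : ℝ) ^ u < A * q / ε := by
    rw [lt_div_iff₀ hεpos]; linarith [h4]
  have h7 : Real.log (B ^ u) < Real.log (A * q / ε) := Real.log_lt_log hBupos h6
  rw [Real.log_pow] at h7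
  have hlogB : 0 < Real.log B := Real.log_pos hB
  have h8 : Real.log (A * q / ε) ≤ (u : ℝ) * Real.log B := by
    rw [div_le_iff₀ hlogB] at hulog; linarith
  push_cast at h7
  linarith
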